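/- (Theorem 2, first bound) In the oblivious model, assume b_k r_k > 0 for k ∈ {1,2}. Then limsup_{T→∞} (1/T) ∑_{t=1}^{T} (1/4) ∑_{m∈{1,2}} ∑_{k∈{1,2}} E[h_{mk}(t)] ≤ (1/2) ∑_{k∈{1,2}} 1/(b_k r_k). -/

import Mathlib

/-- Index type for the family of primitive random variables:
`inl (m, k, t)` indexes the request variable of user `m`, CP `k`, time `t`;
`inr (n, k, t)` indexes the command indicator of eRRH `n`, CP `k`, time `t`. -/
abbrev FranIdx : Type := (Fin 2 × Fin 2 × ℕ) ⊕ (Fin 2 × Fin 2 × ℕ)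

/-- Codomain of each primitive random variable. -/
def FranType : FranIdx → Type
  | .inl _ => Fin 3
  | .inr _ => Bool

instance FranType.instMeasurableSpace : ∀ i, MeasurableSpace (FranType i)
  | .inl _ => inferInstanceAs (MeasurableSpace (Fin 3))
  | .inr _ => inferInstanceAs (MeasurableSpace Bool)

/-- Oblivious 2-user/2-eRRH/2-CP F-RAN model. -/
structure ObliviousFRAN where
  /-- sample space -/
  Ω : Type
  [mΩ : MeasurableSpace Ω]
  μ : MeasureTheory.Measure Ω
  isProb : MeasureTheory.IsProbabilityMeasure μ
  /-- request rates: `bsplit k n = b_k^{(n+1)}` -/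
  bsplit : Fin 2 → Fin 2 → ℝ
  bsplit_nonneg : ∀ k n, 0 ≤ bsplit k n
  bsum_le_one : ∀ k, bsplit k 0 + bsplit k 1 ≤ 1
  /-- command rates -/
  r : Fin 2 → ℝ
  r_nonneg : ∀ k, 0 ≤ r k
  r_le_one : ∀ k, r k ≤ 1
  /-- request variables: value `0` = no request, value `n.succ` = request sent to eRRH `n` -/
  R : Fin 2 → Fin 2 → ℕ → Ω → Fin 3
  /-- command indicators -/
  γ : Fin 2 → Fin 2 → ℕ → Ω → Bool
  R_meas : ∀ m k t, Measurable (R m k t)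
  γ_meas : ∀ n k t, Measurable (γ n k t)
  R_law : ∀ m k t (n : Fin 2), μ {ω | R m k t ω = n.succ} = ENNReal.ofReal (bsplit k n)
  R_law0 : ∀ m k t, μ {ω | R m k t ω = 0} = ENNReal.ofReal (1 - (bsplit k 0 + bsplit k 1))
  γ_law : ∀ n k t, μ {ω | γ n k t ω = true} = ENNReal.ofReal (r k)
  /-- all the primitive random variables are mutually independent -/
  indep : ProbabilityTheory.iIndepFun
      (fun i => Sum.rec (motive := fun j => Ω → FranType j)
        (fun p => R p.1 p.2.1 p.2.2) (fun p => γ p.1 p.2.1 p.2.2) i) μ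

attribute [instance] ObliviousFRAN.mΩ

open MeasureTheory ProbabilityTheory Filter

namespace ObliviousFRAN

variable (M : ObliviousFRAN)

/-- AoI of CP `k` at eRRH `n`. -/
def g (n k : Fin 2) : ℕ → M.Ω → ℕ
  | 0 => fun _ => 1
  | t + 1 => fun ω =>
      if M.γ n k t ω = true ∧ ∃ m : Fin 2, M.R m k t ω = n.succ then 1
      else g n k t ω + 1

/-- AoI of CP `k` at user `m`. -/
def h (m k : Fin 2) : ℕ → M.Ω → ℕ
  | 0 => fun _ => 1
  | t + 1 => fun ω =>
      if M.R m k t ω = 0 then h m k t ω + 1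
      else if M.R m k t ω = 1 then
        (if M.γ 0 k t ω = true then 1 else min (h m k t ω) (M.g 0 k t ω) + 1)
      else
        (if M.γ 1 k t ω = true then 1 else min (h m k t ω) (M.g 1 k t ω) + 1)

/-- Expected AoI of CP `k` at eRRH `n` at time `t`. -/
noncomputable def Eg (n k : Fin 2) (t : ℕ) : ℝ := ∫ ω, (M.g n k t ω : ℝ) ∂M.μ

/-- Expected AoI of CP `k` at user `m` at time `t`. -/
noncomputable def Eh (m k : Fin 2) (t : ℕ) : ℝ := ∫ ω, (M.h m k t ω : ℝ) ∂M.μ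

/-- Total request rate of a user for CP `k`: `b_k = b_k^{(1)} + b_k^{(2)}`. -/
def bk (k : Fin 2) : ℝ := M.bsplit k 0 + M.bsplit k 1

/-- `ζ_{nk} = 1 - (1 - b_k^{(n)})^2`. -/
def ζ (n k : Fin 2) : ℝ := 1 - (1 - M.bsplit k n) ^ 2

end ObliviousFRAN

namespace ObliviousFRAN

variable (M : ObliviousFRAN)

/-- The big family of primitive random variables. -/
def X : ∀ i : FranIdx, M.Ω → FranType i :=
  fun i => Sum.rec (motive := fun j => M.Ω → FranType j)
    (fun p => M.R p.1 p.2.1 p.2.2) (fun p => M.γ p.1 p.2.1 p.2.2) i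

/-- time index of a primitive variable -/
def tIdx : FranIdx → ℕ := Sum.elim (fun p => p.2.2) (fun p => p.2.2)

lemma X_meas : ∀ i, Measurable (M.X i)
  | .inl _ => M.R_meas _ _ _
  | .inr _ => M.γ_meas _ _ _

/-- σ-algebra generated by variables with time < t -/
def F (t : ℕ) : MeasurableSpace M.Ω :=
  ⨆ i ∈ {i : FranIdx | tIdx i < t}, (FranType.instMeasurableSpace i).comap (M.X i)

/-- σ-algebra generated by variables with time = t -/
def G (t : ℕ) : MeasurableSpace M.Ω :=
  ⨆ i ∈ {i : FranIdx | tIdx i = t}, (FranType.instMeasurableSpace i).comap (M.X i)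

lemma F_le (t : ℕ) : M.F t ≤ M.mΩ :=
  iSup₂_le fun i _ => (M.X_meas i).comap_le

lemma G_le (t : ℕ) : M.G t ≤ M.mΩ :=
  iSup₂_le fun i _ => (M.X_meas i).comap_le

lemma F_mono : Monotone M.F := fun s t hst =>
  iSup₂_le fun i hi => le_iSup₂_of_le i (lt_of_lt_of_le hi hst) le_rfl

lemma indep_FG (t : ℕ) : Indep (M.F t) (M.G t) M.μ := by
  refine indep_iSup_of_disjoint (fun i => (M.X_meas i).comap_le) M.indep.iIndep ?_
  rw [Set.disjoint_left]
  intro i hi hi'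
  exact absurd (show tIdx i = t from hi') (ne_of_lt (show tIdx i < t from hi))

lemma measurable_X_G (i : FranIdx) : Measurable[M.G (tIdx i)] (M.X i) :=
  measurable_iff_comap_le.mpr (le_iSup₂_of_le i rfl le_rfl)

lemma measurable_X_F {i : FranIdx} {t : ℕ} (h : tIdx i < t) : Measurable[M.F t] (M.X i) :=
  measurable_iff_comap_le.mpr (le_iSup₂_of_le i h le_rfl)

lemma measurable_R_G (m k : Fin 2) (t : ℕ) : Measurable[M.G t] (M.R m k t) :=
  M.measurable_X_G (.inl (m, k, t))

lemma measurable_γ_G (n k : Fin 2) (t : ℕ) : Measurable[M.G t] (M.γ n k t) :=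
  M.measurable_X_G (.inr (n, k, t))

lemma measurable_R_F (m k : Fin 2) (t : ℕ) : Measurable[M.F (t + 1)] (M.R m k t) :=
  M.measurable_X_F (i := .inl (m, k, t)) (Nat.lt_succ_self t)

lemma measurable_γ_F (n k : Fin 2) (t : ℕ) : Measurable[M.F (t + 1)] (M.γ n k t) :=
  M.measurable_X_F (i := .inr (n, k, t)) (Nat.lt_succ_self t)

lemma g_measF (n k : Fin 2) (t : ℕ) : Measurable[M.F t] (M.g n k t) := by
  induction t with
  | zero => exact measurable_const
  | succ t IH =>
    have hg : Measurable[M.F (t + 1)] (M.g n k t) :=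
      IH.mono (M.F_mono (Nat.le_succ t)) le_rfl
    have hs : MeasurableSet[M.F (t + 1)]
        {ω | M.γ n k t ω = true ∧ ∃ m : Fin 2, M.R m k t ω = n.succ} := by
      have : {ω | M.γ n k t ω = true ∧ ∃ m : Fin 2, M.R m k t ω = n.succ}
          = (M.γ n k t ⁻¹' {true}) ∩ ⋃ m : Fin 2, (M.R m k t ⁻¹' {n.succ}) := by
        ext ω; simp [Set.mem_iUnion]
      rw [this]
      exact ((M.measurable_γ_F n k t) (measurableSet_singleton _)).inter
        (MeasurableSet.iUnion fun m => (M.measurable_R_F m k t) (measurableSet_singleton _))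
    exact Measurable.ite hs measurable_const (hg.add_const 1)

lemma h_measF (m k : Fin 2) (t : ℕ) : Measurable[M.F t] (M.h m k t) := by
  induction t with
  | zero => exact measurable_const
  | succ t IH =>
    have hh : Measurable[M.F (t + 1)] (M.h m k t) :=
      IH.mono (M.F_mono (Nat.le_succ t)) le_rfl
    have hg0 : Measurable[M.F (t + 1)] (M.g 0 k t) :=
      (M.g_measF 0 k t).mono (M.F_mono (Nat.le_succ t)) le_rfl
    have hg1 : Measurable[M.F (t + 1)] (M.g 1 k t) :=
      (M.g_measF 1 k t).mono (M.F_mono (Nat.le_succ t)) le_rfl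
    have hR : Measurable[M.F (t + 1)] (M.R m k t) := M.measurable_R_F m k t
    have hγ0 : Measurable[M.F (t + 1)] (M.γ 0 k t) := M.measurable_γ_F 0 k t
    have hγ1 : Measurable[M.F (t + 1)] (M.γ 1 k t) := M.measurable_γ_F 1 k t
    have s0 : MeasurableSet[M.F (t + 1)] {ω | M.R m k t ω = 0} :=
      hR (measurableSet_singleton _)
    have s1 : MeasurableSet[M.F (t + 1)] {ω | M.R m k t ω = 1} :=
      hR (measurableSet_singleton _)
    have sγ0 : MeasurableSet[M.F (t + 1)] {ω | M.γ 0 k t ω = true} :=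
      hγ0 (measurableSet_singleton _)
    have sγ1 : MeasurableSet[M.F (t + 1)] {ω | M.γ 1 k t ω = true} :=
      hγ1 (measurableSet_singleton _)
    exact Measurable.ite s0 (hh.add_const 1)
      (Measurable.ite s1
        (Measurable.ite sγ0 measurable_const ((hh.min hg0).add_const 1))
        (Measurable.ite sγ1 measurable_const ((hh.min hg1).add_const 1)))

lemma h_meas (m k : Fin 2) (t : ℕ) : Measurable (M.h m k t) :=
  (M.h_measF m k t).mono (M.F_le t) le_rfl

lemma h_le_succ (m k : Fin 2) (t : ℕ) (ω : M.Ω) : M.h m k t ω ≤ t + 1 := by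
  induction t with
  | zero => exact le_refl 1
  | succ t IH =>
    have h0 : min (M.h m k t ω) (M.g 0 k t ω) ≤ M.h m k t ω := min_le_left _ _
    have h1 : min (M.h m k t ω) (M.g 1 k t ω) ≤ M.h m k t ω := min_le_left _ _
    simp only [h]
    split_ifs <;> omega

lemma one_le_h (m k : Fin 2) (t : ℕ) (ω : M.Ω) : 1 ≤ M.h m k t ω := by
  induction t with
  | zero => exact le_refl 1
  | succ t IH =>
    simp only [h]
    split_ifs <;> omega

lemma h_int (m k : Fin 2) (t : ℕ) : Integrable (fun ω => (M.h m k t ω : ℝ)) M.μ := by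
  haveI := M.isProb
  refine Integrable.mono' (integrable_const ((t : ℝ) + 1))
    (measurable_from_top.comp (M.h_meas m k t)).aestronglyMeasurable ?_
  filter_upwards with ω
  rw [Real.norm_natCast]
  exact_mod_cast M.h_le_succ m k t ω

/-- the reset event for user m, CP k at time t -/
def Ev (m k : Fin 2) (t : ℕ) : Set M.Ω :=
  {ω | (M.R m k t ω = 1 ∧ M.γ 0 k t ω = true) ∨ (M.R m k t ω = 2 ∧ M.γ 1 k t ω = true)}

lemma Ev_eq (m k : Fin 2) (t : ℕ) :
    M.Ev m k t = ((M.R m k t ⁻¹' {1}) ∩ (M.γ 0 k t ⁻¹' {true}))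
      ∪ ((M.R m k t ⁻¹' {2}) ∩ (M.γ 1 k t ⁻¹' {true})) := by
  ext ω; simp [Ev]

lemma Ev_measG (m k : Fin 2) (t : ℕ) : MeasurableSet[M.G t] (M.Ev m k t) := by
  rw [Ev_eq]
  exact (((M.measurable_R_G m k t) (measurableSet_singleton _)).inter
      ((M.measurable_γ_G 0 k t) (measurableSet_singleton _))).union
    (((M.measurable_R_G m k t) (measurableSet_singleton _)).inter
      ((M.measurable_γ_G 1 k t) (measurableSet_singleton _)))

lemma Ev_meas (m k : Fin 2) (t : ℕ) : MeasurableSet (M.Ev m k t) :=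
  M.G_le t _ (M.Ev_measG m k t)

lemma measure_R_inter_γ (m k : Fin 2) (t : ℕ) (n : Fin 2) :
    M.μ ((M.R m k t ⁻¹' {(n.succ : Fin 3)}) ∩ (M.γ n k t ⁻¹' {true}))
      = ENNReal.ofReal (M.bsplit k n * M.r k) := by
  have hindep : IndepFun (M.R m k t) (M.γ n k t) M.μ := by
    have := M.indep.indepFun (i := .inl (m, k, t)) (j := .inr (n, k, t))
      (by simp)
    exact this
  have := hindep.measure_inter_preimage_eq_mul {(n.succ : Fin 3)} {true}
    (measurableSet_singleton _) (measurableSet_singleton _)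
  rw [this]
  have hR : M.μ (M.R m k t ⁻¹' {(n.succ : Fin 3)}) = ENNReal.ofReal (M.bsplit k n) := by
    have := M.R_law m k t n
    convert this using 2
    rfl
  have hγ : M.μ (M.γ n k t ⁻¹' {true}) = ENNReal.ofReal (M.r k) := by
    have := M.γ_law n k t
    convert this using 2
    rfl
  rw [hR, hγ, ← ENNReal.ofReal_mul (M.bsplit_nonneg k n)]

lemma measure_Ev (m k : Fin 2) (t : ℕ) :
    M.μ (M.Ev m k t) = ENNReal.ofReal (M.bk k * M.r k) := by
  rw [Ev_eq]
  have hd : Disjoint ((M.R m k t ⁻¹' {1}) ∩ (M.γ 0 k t ⁻¹' {true}))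
      ((M.R m k t ⁻¹' {2}) ∩ (M.γ 1 k t ⁻¹' {true})) := by
    rw [Set.disjoint_left]
    rintro ω ⟨h1, -⟩ ⟨h2, -⟩
    simp only [Set.mem_preimage, Set.mem_singleton_iff] at h1 h2
    rw [h1] at h2
    exact absurd h2 (by decide)
  have hm2 : MeasurableSet ((M.R m k t ⁻¹' {(2 : Fin 3)}) ∩ (M.γ 1 k t ⁻¹' {true})) :=
    ((M.R_meas m k t) (measurableSet_singleton _)).inter
      ((M.γ_meas 1 k t) (measurableSet_singleton _))
  rw [measure_union hd hm2]
  have e0 : ((0 : Fin 2).succ : Fin 3) = 1 := rfl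
  have e1 : ((1 : Fin 2).succ : Fin 3) = 2 := rfl
  have h0 := M.measure_R_inter_γ m k t 0
  have h1 := M.measure_R_inter_γ m k t 1
  rw [e0] at h0; rw [e1] at h1
  rw [h0, h1, ← ENNReal.ofReal_add (mul_nonneg (M.bsplit_nonneg k 0) (M.r_nonneg k)) (mul_nonneg (M.bsplit_nonneg k 1) (M.r_nonneg k))]
  congr 1
  simp [bk]
  ring

end ObliviousFRAN
namespace ObliviousFRAN

variable (M : ObliviousFRAN)

lemma indepFun_of_meas {β γ : Type*} [mβ : MeasurableSpace β] [mγ : MeasurableSpace γ]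
    {m1 m2 : MeasurableSpace M.Ω} {f : M.Ω → β} {g : M.Ω → γ}
    (hind : Indep m1 m2 M.μ) (hf : Measurable[m1] f) (hg : Measurable[m2] g) :
    IndepFun f g M.μ := by
  rw [indepFun_iff_measure_inter_preimage_eq_mul]
  intro s t hs ht
  exact (hind.indepSet_of_measurableSet (hf hs) (hg ht)).measure_inter_eq_mul

lemma Eh_nonneg (m k : Fin 2) (t : ℕ) : 0 ≤ M.Eh m k t :=
  integral_nonneg fun ω => by positivity

lemma Eh_succ_le (m k : Fin 2) (t : ℕ) :
    M.Eh m k (t + 1) ≤ M.bk k * M.r k + (1 - M.bk k * M.r k) * (M.Eh m k t + 1) := by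
  haveI := M.isProb
  set p : ℝ := M.bk k * M.r k with hp
  have hp0 : 0 ≤ p := mul_nonneg
    (add_nonneg (M.bsplit_nonneg k 0) (M.bsplit_nonneg k 1)) (M.r_nonneg k)
  set χ : M.Ω → ℝ := (M.Ev m k t).indicator (fun _ => (1 : ℝ)) with hχdef
  set Y : M.Ω → ℝ := fun ω => (M.h m k t ω : ℝ) + 1 with hYdef
  have hχ_measG : Measurable[M.G t] χ := measurable_const.indicator (M.Ev_measG m k t)
  have hχ_meas : Measurable χ := measurable_const.indicator (M.Ev_meas m k t)
  have hY_measF : Measurable[M.F t] Y :=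
    (measurable_from_top.comp (M.h_measF m k t)).add_const 1
  have hindep : IndepFun Y χ M.μ :=
    M.indepFun_of_meas (M.indep_FG t) hY_measF hχ_measG
  have hYint : Integrable Y M.μ := (M.h_int m k t).add (integrable_const 1)
  have hχint : Integrable χ M.μ := (integrable_const (1 : ℝ)).indicator (M.Ev_meas m k t)
  have hχY_int : Integrable (fun ω => χ ω * Y ω) M.μ := by
    refine hYint.bdd_mul hχ_meas.aestronglyMeasurable (c := 1) (Filter.Eventually.of_forall fun ω => ?_)
    rw [hχdef]
    by_cases hE : ω ∈ M.Ev m k t <;>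
      simp [Set.indicator_of_mem, Set.indicator_of_notMem, hE]
  have hEχ : ∫ ω, χ ω ∂M.μ = p := by
    rw [hχdef, integral_indicator_const _ (M.Ev_meas m k t), measureReal_def, M.measure_Ev,
      ENNReal.toReal_ofReal hp0]
    simp [hp]
  have hEY : ∫ ω, Y ω ∂M.μ = M.Eh m k t + 1 := by
    rw [hYdef]
    rw [integral_add (M.h_int m k t) (integrable_const 1), integral_const]
    simp [Eh]
  have hpt : ∀ ω, (M.h m k (t + 1) ω : ℝ) ≤ χ ω + (1 - χ ω) * Y ω := by
    intro ω
    by_cases hE : ω ∈ M.Ev m k t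
    · have hval : M.h m k (t + 1) ω = 1 := by
        rcases hE with ⟨hR, hγ⟩ | ⟨hR, hγ⟩ <;> simp [ObliviousFRAN.h, hR, hγ]
      rw [hval, hχdef]
      simp [Set.indicator_of_mem hE]
    · have hval : M.h m k (t + 1) ω ≤ M.h m k t ω + 1 := by
        have h0 : min (M.h m k t ω) (M.g 0 k t ω) ≤ M.h m k t ω := min_le_left _ _
        have h1 : min (M.h m k t ω) (M.g 1 k t ω) ≤ M.h m k t ω := min_le_left _ _
        simp only [ObliviousFRAN.h]
        split_ifs <;> omega
      have hzero : χ ω = 0 := by rw [hχdef]; exact Set.indicator_of_notMem hE _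
      have hcast : (M.h m k (t + 1) ω : ℝ) ≤ (M.h m k t ω : ℝ) + 1 := by exact_mod_cast hval
      have hYω : Y ω = (M.h m k t ω : ℝ) + 1 := rfl
      rw [hzero, hYω]
      linarith
  have hRHSint : Integrable (fun ω => χ ω + (1 - χ ω) * Y ω) M.μ := by
    have : (fun ω => χ ω + (1 - χ ω) * Y ω) = fun ω => χ ω + (Y ω - χ ω * Y ω) := by
      funext ω; ring
    rw [this]
    exact hχint.add (hYint.sub hχY_int)
  have hmono := integral_mono (M.h_int m k (t + 1)) hRHSint hpt
  have hsub : ∫ ω, (Y ω - χ ω * Y ω) ∂M.μ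
      = (∫ ω, Y ω ∂M.μ) - ∫ ω, χ ω * Y ω ∂M.μ :=
    integral_sub hYint hχY_int
  have hadd : ∫ ω, (χ ω + (Y ω - χ ω * Y ω)) ∂M.μ
      = (∫ ω, χ ω ∂M.μ) + ∫ ω, (Y ω - χ ω * Y ω) ∂M.μ :=
    integral_add hχint (hYint.sub hχY_int)
  have hsplit : ∫ ω, (χ ω + (1 - χ ω) * Y ω) ∂M.μ
      = (∫ ω, χ ω ∂M.μ) + ((∫ ω, Y ω ∂M.μ) - ∫ ω, χ ω * Y ω ∂M.μ) := by
    have h1 : ∫ ω, (χ ω + (1 - χ ω) * Y ω) ∂M.μ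
        = ∫ ω, (χ ω + (Y ω - χ ω * Y ω)) ∂M.μ := by
      congr 1; funext ω; ring
    rw [h1, hadd, hsub]
  have hmul : ∫ ω, χ ω * Y ω ∂M.μ = p * (M.Eh m k t + 1) := by
    calc ∫ ω, χ ω * Y ω ∂M.μ
        = (∫ ω, χ ω ∂M.μ) * ∫ ω, Y ω ∂M.μ :=
          hindep.symm.integral_fun_mul_eq_mul_integral hχint.aestronglyMeasurable hYint.aestronglyMeasurable
      _ = p * (M.Eh m k t + 1) := by rw [hEχ, hEY]
  rw [hsplit, hEχ, hEY, hmul] at hmono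
  calc M.Eh m k (t + 1) = ∫ ω, (M.h m k (t + 1) ω : ℝ) ∂M.μ := rfl
    _ ≤ p + ((M.Eh m k t + 1) - p * (M.Eh m k t + 1)) := hmono
    _ = p + (1 - p) * (M.Eh m k t + 1) := by ring

lemma Eh_le (m k : Fin 2) (hk : 0 < M.bk k * M.r k) (t : ℕ) :
    M.Eh m k t ≤ 1 / (M.bk k * M.r k) := by
  haveI := M.isProb
  set p : ℝ := M.bk k * M.r k with hp
  have hp1 : p ≤ 1 := by
    have hb : M.bsplit k 0 + M.bsplit k 1 ≤ 1 := M.bsum_le_one k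
    have hb0 : 0 ≤ M.bsplit k 0 + M.bsplit k 1 :=
      add_nonneg (M.bsplit_nonneg k 0) (M.bsplit_nonneg k 1)
    have hr1 := M.r_le_one k
    have hr0 := M.r_nonneg k
    rw [hp]
    unfold ObliviousFRAN.bk
    nlinarith
  have hq : p * (1 / p) = 1 := mul_one_div_cancel (ne_of_gt hk)
  induction t with
  | zero =>
    have h0 : M.Eh m k 0 = 1 := by
      simp [Eh, ObliviousFRAN.h, measure_univ]
    rw [h0]
    exact one_le_one_div hk hp1
  | succ t IH =>
    have h2 := M.Eh_succ_le m k t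
    rw [← hp] at h2
    nlinarith [h2, IH, hp1, hk]

end ObliviousFRAN

/-- Theorem 2, first bound. -/
theorem stmt4 (M : ObliviousFRAN) (hpos : ∀ k : Fin 2, 0 < M.bk k * M.r k) :
    limsup
      (fun T : ℕ =>
        (1 / (T : ℝ)) * ∑ t ∈ Finset.Icc 1 T,
          (1 / 4 : ℝ) * ∑ m : Fin 2, ∑ k : Fin 2, M.Eh m k t)
      atTop
    ≤ (1 / 2 : ℝ) * ∑ k : Fin 2, 1 / (M.bk k * M.r k) := by
  haveI := M.isProb
  set C : ℝ := (1 / 2 : ℝ) * ∑ k : Fin 2, 1 / (M.bk k * M.r k) with hC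
  have hC0 : 0 ≤ C := by
    apply mul_nonneg (by norm_num)
    exact Finset.sum_nonneg fun k _ => le_of_lt (one_div_pos.mpr (hpos k))
  have hterm : ∀ t : ℕ, (1 / 4 : ℝ) * ∑ m : Fin 2, ∑ k : Fin 2, M.Eh m k t ≤ C := by
    intro t
    have hsum : ∑ m : Fin 2, ∑ k : Fin 2, M.Eh m k t
        ≤ ∑ m : Fin 2, ∑ k : Fin 2, 1 / (M.bk k * M.r k) :=
      Finset.sum_le_sum fun m _ => Finset.sum_le_sum fun k _ => M.Eh_le m k (hpos k) t
    have h2 : ∑ m : Fin 2, ∑ k : Fin 2, (1 / (M.bk k * M.r k))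
        = 2 * ∑ k : Fin 2, 1 / (M.bk k * M.r k) := by
      rw [Fin.sum_univ_two]; ring
    rw [hC]
    linarith [hsum, h2]
  have hterm0 : ∀ t : ℕ, 0 ≤ (1 / 4 : ℝ) * ∑ m : Fin 2, ∑ k : Fin 2, M.Eh m k t := by
    intro t
    apply mul_nonneg (by norm_num)
    exact Finset.sum_nonneg fun m _ => Finset.sum_nonneg fun k _ => M.Eh_nonneg m k t
  have key : ∀ T : ℕ,
      (1 / (T : ℝ)) * ∑ t ∈ Finset.Icc 1 T,
        (1 / 4 : ℝ) * ∑ m : Fin 2, ∑ k : Fin 2, M.Eh m k t ≤ C := by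
    intro T
    rcases Nat.eq_zero_or_pos T with hT | hT
    · subst hT; simpa using hC0
    · have hTpos : (0 : ℝ) < T := by exact_mod_cast hT
      have hsum : ∑ t ∈ Finset.Icc 1 T,
          (1 / 4 : ℝ) * ∑ m : Fin 2, ∑ k : Fin 2, M.Eh m k t ≤ (T : ℝ) * C := by
        calc ∑ t ∈ Finset.Icc 1 T, (1 / 4 : ℝ) * ∑ m : Fin 2, ∑ k : Fin 2, M.Eh m k t
            ≤ ∑ t ∈ Finset.Icc 1 T, C := Finset.sum_le_sum fun t _ => hterm t
          _ = (T : ℝ) * C := by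
            rw [Finset.sum_const, Nat.card_Icc, nsmul_eq_mul]
            simp
      calc (1 / (T : ℝ)) * ∑ t ∈ Finset.Icc 1 T,
            (1 / 4 : ℝ) * ∑ m : Fin 2, ∑ k : Fin 2, M.Eh m k t
          ≤ (1 / (T : ℝ)) * ((T : ℝ) * C) := by
            apply mul_le_mul_of_nonneg_left hsum
            positivity
        _ = C := by field_simp
  have hnonneg : ∀ T : ℕ, (0 : ℝ) ≤ (1 / (T : ℝ)) * ∑ t ∈ Finset.Icc 1 T,
      (1 / 4 : ℝ) * ∑ m : Fin 2, ∑ k : Fin 2, M.Eh m k t := by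
    intro T
    apply mul_nonneg (by positivity)
    exact Finset.sum_nonneg fun t _ => hterm0 t
  exact limsup_le_of_le (isCoboundedUnder_le_of_le atTop hnonneg)
    (Filter.Eventually.of_forall key)
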